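/- Assume E(|u|²) < ∞ μ-a.e., let v = E(u), and assume {x : v(x) ≠ 0} = {x : E(|u|²)(x) > 0} up to μ-null sets. Then the following are equivalent: (a) D of the operator f ↦ E(|u|²)·(EM_u f) equals the domain of f ↦ ū·v·(EM_u f) (both taken inside D(EM_u) with values required in L²(μ)) and the two operators agree μ-a.e. on it (i.e., EM_u is quasinormal: EM_u|EM_u|² = |EM_u|²EM_u); (b) ū·v = E(|u|²) μ-a.e. on X. -/

import Mathlib

open MeasureTheory Filter ENNReal NNReal

noncomputable section

variable {X : Type*}

/-- A set `A` in the sub-σ-algebra `m` is *admissible* for the weight `u` if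
`μ A + ∫_A |u|² dμ < ∞`. -/
def Admissible (m : MeasurableSpace X) [m0 : MeasurableSpace X] (μ : Measure X)
    (u : X → ℂ) (A : Set X) : Prop :=
  MeasurableSet[m] A ∧ μ A + ∫⁻ x in A, (‖u x‖₊ : ℝ≥0∞) ^ 2 ∂μ < ⊤

/-- `gf` is a version of `E(u·f)`, i.e. `gf` is an `m`-measurable function in `L²(μ)` with
`∫_A u·f dμ = ∫_A gf dμ` for every admissible `A`.  `f ∈ D(EM_u)` iff `f ∈ L²(μ)` and such a
`gf` exists. -/
def IsWCE (m : MeasurableSpace X) [m0 : MeasurableSpace X] (μ : Measure X)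
    (u f gf : X → ℂ) : Prop :=
  StronglyMeasurable[m] gf ∧ MemLp gf 2 μ ∧
    ∀ A : Set X, Admissible m μ u A → ∫ x in A, u x * f x ∂μ = ∫ x in A, gf x ∂μ

private lemma memL2_indicator_bound {X : Type*} [m0 : MeasurableSpace X] {μ : Measure X}
    {A : Set X} (hA : MeasurableSet A) (hμA : μ A < ⊤) {f : X → ℂ}
    (hf : AEStronglyMeasurable f μ) {C : ℝ} (hC : ∀ x ∈ A, ‖f x‖ ≤ C) :
    MemLp (A.indicator f) 2 μ := by
  rw [memLp_indicator_iff_restrict hA]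
  haveI : IsFiniteMeasure (μ.restrict A) := ⟨by rwa [Measure.restrict_apply_univ]⟩
  refine MemLp.mono_exponent (memLp_top_of_bound (hf.restrict) C ?_) le_top
  exact (ae_restrict_iff' hA).2 (ae_of_all _ hC)

/-- With `E(|u|²) < ∞` a.e., `v = E(u)` and `{v ≠ 0} = {E(|u|²) > 0}` up to
null sets, `EM_u` is quasinormal (i.e. the operators `f ↦ E(|u|²)·(EM_u f)` and
`f ↦ ū·v·(EM_u f)` have the same domain inside `D(EM_u)` and agree a.e. on it) iff
`ū·v = E(|u|²)` a.e. on `X`. -/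
theorem stmt16 (m : MeasurableSpace X) [m0 : MeasurableSpace X] (hm : m ≤ m0)
    (μ : Measure X) [SigmaFinite μ] [SigmaFinite (μ.trim hm)]
    (u : X → ℂ) (hu : Measurable u)
    (g : X → ℝ≥0∞) (hgm : Measurable[m] g)
    (hg : ∀ A : Set X, MeasurableSet[m] A →
      ∫⁻ x in A, (‖u x‖₊ : ℝ≥0∞) ^ 2 ∂μ = ∫⁻ x in A, g x ∂μ)
    (hgfin : ∀ᵐ x ∂μ, g x < ⊤)
    (v : X → ℂ) (hvm : StronglyMeasurable[m] v)
    (hv : ∀ A : Set X, Admissible m μ u A → ∫ x in A, u x ∂μ = ∫ x in A, v x ∂μ)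
    (hS : ∀ᵐ x ∂μ, (v x ≠ 0 ↔ g x ≠ 0)) :
    ((∀ f : X → ℂ, MemLp f 2 μ →
        ((∃ gf : X → ℂ, IsWCE m μ u f gf ∧
            MemLp (fun x => ((g x).toReal : ℂ) * gf x) 2 μ) ↔
          (∃ gf : X → ℂ, IsWCE m μ u f gf ∧
            MemLp (fun x => (starRingEnd ℂ) (u x) * v x * gf x) 2 μ))) ∧
      (∀ f gf : X → ℂ, MemLp f 2 μ → IsWCE m μ u f gf →
        MemLp (fun x => ((g x).toReal : ℂ) * gf x) 2 μ →
        (fun x => ((g x).toReal : ℂ) * gf x) =ᵐ[μ]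
          fun x => (starRingEnd ℂ) (u x) * v x * gf x)) ↔
    (∀ᵐ x ∂μ, (starRingEnd ℂ) (u x) * v x = ((g x).toReal : ℂ)) := by
  constructor
  · rintro ⟨-, h2⟩
    set S : ℕ → Set X := spanningSets (μ.trim hm) with hSdef
    set A : ℕ → ℕ → Set X := fun k n =>
      S k ∩ {x | g x ≤ (n : ℝ≥0∞)} ∩ {x | ‖v x‖ ≤ (n : ℝ)} with hAdef
    have hAm : ∀ k n, MeasurableSet[m] (A k n) := fun k n =>
      ((measurableSet_spanningSets (μ.trim hm) k).inter
        (hgm measurableSet_Iic)).inter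
        (hvm.norm.measurable measurableSet_Iic)
    have hAfin : ∀ k n, μ (A k n) < ⊤ := by
      intro k n
      calc μ (A k n) ≤ μ (S k) := measure_mono fun x hx => hx.1.1
        _ = μ.trim hm (S k) :=
          (trim_measurableSet_eq hm (measurableSet_spanningSets _ k)).symm
        _ < ⊤ := measure_spanningSets_lt_top _ k
    have hAadm : ∀ k n, Admissible m μ u (A k n) := by
      intro k n
      refine ⟨hAm k n, ?_⟩
      have h1 : ∫⁻ x in A k n, (‖u x‖₊ : ℝ≥0∞) ^ 2 ∂μ = ∫⁻ x in A k n, g x ∂μ :=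
        hg _ (hAm k n)
      have h2' : ∫⁻ x in A k n, g x ∂μ ≤ (n : ℝ≥0∞) * μ (A k n) := by
        calc ∫⁻ x in A k n, g x ∂μ ≤ ∫⁻ _ in A k n, (n : ℝ≥0∞) ∂μ :=
            setLIntegral_mono measurable_const fun x hx => hx.1.2
          _ = (n : ℝ≥0∞) * μ (A k n) := setLIntegral_const _ _
      rw [ENNReal.add_lt_top]
      refine ⟨hAfin k n, ?_⟩
      rw [h1]
      exact lt_of_le_of_lt h2'
        (ENNReal.mul_lt_top (ENNReal.natCast_lt_top n) (hAfin k n))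
    have hwce : ∀ k n, IsWCE m μ u ((A k n).indicator fun _ => (1 : ℂ))
        ((A k n).indicator v) := by
      intro k n
      refine ⟨hvm.indicator (hAm k n),
        memL2_indicator_bound (hm _ (hAm k n)) (hAfin k n)
          (hvm.mono hm).aestronglyMeasurable (C := (n : ℝ)) (fun x hx => hx.2), ?_⟩
      intro B hB
      have hABadm : Admissible m μ u (A k n ∩ B) := by
        refine ⟨(hAm k n).inter hB.1, lt_of_le_of_lt ?_ hB.2⟩
        exact add_le_add (measure_mono Set.inter_subset_right)
          (lintegral_mono_set Set.inter_subset_right)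
      have hint : ∀ w : X → ℂ,
          ∫ x in B, (A k n).indicator w x ∂μ = ∫ x in A k n ∩ B, w x ∂μ := by
        intro w
        rw [integral_indicator (hm _ (hAm k n)),
          Measure.restrict_restrict (hm _ (hAm k n))]
      calc ∫ x in B, u x * (A k n).indicator (fun _ => (1 : ℂ)) x ∂μ
          = ∫ x in B, (A k n).indicator u x ∂μ := by
            refine integral_congr_ae (ae_of_all _ fun x => ?_)
            by_cases hx : x ∈ A k n <;> simp [hx]
        _ = ∫ x in A k n ∩ B, u x ∂μ := hint u
        _ = ∫ x in A k n ∩ B, v x ∂μ := hv _ hABadm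
        _ = ∫ x in B, (A k n).indicator v x ∂μ := (hint v).symm
    have hgv : ∀ k n, MemLp (fun x => ((g x).toReal : ℂ) * (A k n).indicator v x) 2 μ := by
      intro k n
      have heq : (fun x => ((g x).toReal : ℂ) * (A k n).indicator v x)
          = (A k n).indicator fun x => ((g x).toReal : ℂ) * v x := by
        funext x; by_cases hx : x ∈ A k n <;> simp [hx]
      rw [heq]
      refine memL2_indicator_bound (hm _ (hAm k n)) (hAfin k n)
        ?_ (C := (n : ℝ) * n) ?_
      · exact ((Complex.measurable_ofReal.comp
          ((hgm.mono hm le_rfl).ennreal_toReal)).aestronglyMeasurable).mul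
          (hvm.mono hm).aestronglyMeasurable
      · intro x hx
        rw [norm_mul]
        have h1 : ‖(((g x).toReal : ℝ) : ℂ)‖ ≤ (n : ℝ) := by
          rw [Complex.norm_real, Real.norm_eq_abs, abs_of_nonneg ENNReal.toReal_nonneg]
          calc (g x).toReal ≤ ((n : ℝ≥0∞)).toReal :=
              ENNReal.toReal_mono (by simp) hx.1.2
            _ = (n : ℝ) := by simp
        exact mul_le_mul h1 hx.2 (norm_nonneg _) (by positivity)
    have key : ∀ᵐ x ∂μ, ∀ k n : ℕ, x ∈ A k n →
        ((g x).toReal : ℂ) * v x = (starRingEnd ℂ) (u x) * v x * v x := by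
      rw [ae_all_iff]; intro k
      rw [ae_all_iff]; intro n
      have h3 := h2 ((A k n).indicator fun _ => (1 : ℂ)) ((A k n).indicator v)
        (memL2_indicator_bound (hm _ (hAm k n)) (hAfin k n)
          aestronglyMeasurable_const (C := 1) (fun x _ => by simp))
        (hwce k n) (hgv k n)
      filter_upwards [h3] with x hx hxA
      simpa [Set.indicator_of_mem hxA] using hx
    filter_upwards [key, hgfin, hS] with x hkey hfin hs
    obtain ⟨k, hk⟩ : ∃ k, x ∈ S k := by
      have hx : x ∈ ⋃ i, spanningSets (μ.trim hm) i := by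
        rw [iUnion_spanningSets]; exact Set.mem_univ x
      exact Set.mem_iUnion.1 hx
    by_cases hv0 : v x = 0
    · have hg0 : g x = 0 := by
        by_contra h; exact hs.2 h hv0
      simp [hv0, hg0]
    · obtain ⟨n1, hn1⟩ := ENNReal.exists_nat_gt hfin.ne
      obtain ⟨n2, hn2⟩ := exists_nat_ge ‖v x‖
      have hgx : g x ≤ ((max n1 n2 : ℕ) : ℝ≥0∞) :=
        le_trans hn1.le (Nat.cast_le.2 (le_max_left n1 n2))
      have hvx : ‖v x‖ ≤ ((max n1 n2 : ℕ) : ℝ) :=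
        le_trans hn2 (Nat.cast_le.2 (le_max_right n1 n2))
      have heq := hkey k (max n1 n2) ⟨⟨hk, hgx⟩, hvx⟩
      exact (mul_right_cancel₀ hv0 heq).symm
  · intro h
    constructor
    · intro f hf
      constructor
      · rintro ⟨gf, hwce, hmem⟩
        refine ⟨gf, hwce, MemLp.ae_eq ?_ hmem⟩
        filter_upwards [h] with x hx
        rw [hx]
      · rintro ⟨gf, hwce, hmem⟩
        refine ⟨gf, hwce, MemLp.ae_eq ?_ hmem⟩
        filter_upwards [h] with x hx
        rw [hx]
    · intro f gf hf hwce hmem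
      filter_upwards [h] with x hx
      rw [hx]
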